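/- Consider the chain of F_3-vector spaces with basis {s^j} ∪ {s^j r^i : i > 0} ∪ {s^{j−i} t^i : 0 < i ≤ j} (a 'two-tailed' 3-complex), with D(s^j) = (j+ε)·s^j r + j·s^{j−1} t, D(s^j r^i) = (j+ε−i)·s^j r^{i+1}, D(s^{j−i} t^i) = (j−i)·s^{j−i−1} t^{i+1}, coefficients in F_3. Then D^3 = 0, both infinite/finite tails are eventually exact, and the non-free F_3[D]/(D^3)-summands are: for (ε, j mod 3) = (0,0): one 1-dim summand; (0,1): one 2-dim and one 1-dim; (0,2): one 2-dim; (1,0): one 2-dim; (1,1): one 1-dim; (1,2): none; (2,0): none; (2,1): one 2-dim; (2,2): one 1-dim. -/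

import Mathlib

/-- The "two-tailed" 3-complex: the `F₃`-vector space with basis `a₀` (for `sʲ`),
`bᵢ, i ≥ 1` (for `sʲrⁱ`; `b_{n+1} =` index `inr (inl n)`) and `cᵢ, 1 ≤ i ≤ j`
(for `s^{j−i}tⁱ`; `c_{i+1} =` index `inr (inr i)`), with
`D a₀ = (j+ε) b₁ + j c₁`, `D bᵢ = (j+ε−i) b_{i+1}`, `D cᵢ = (j−i) c_{i+1}`, `D c_j = 0`. -/
noncomputable def D19 (j : ℕ) (ε : ZMod 3) :
    ((Unit ⊕ ℕ ⊕ Fin j) →₀ ZMod 3) →ₗ[ZMod 3] ((Unit ⊕ ℕ ⊕ Fin j) →₀ ZMod 3) :=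
  Finsupp.lsum (ZMod 3) fun idx =>
    LinearMap.toSpanSingleton (ZMod 3) ((Unit ⊕ ℕ ⊕ Fin j) →₀ ZMod 3)
      (match idx with
        | Sum.inl _ =>
            ((j : ZMod 3) + ε) • Finsupp.single (Sum.inr (Sum.inl 0)) 1 +
              (j : ZMod 3) •
                (if h : 0 < j then Finsupp.single (Sum.inr (Sum.inr ⟨0, h⟩)) 1 else 0)
        | Sum.inr (Sum.inl n) =>
            ((j : ZMod 3) + ε - ((n + 1 : ℕ) : ZMod 3)) •
              Finsupp.single (Sum.inr (Sum.inl (n + 1))) 1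
        | Sum.inr (Sum.inr i) =>
            if h : (i : ℕ) + 1 < j then
              ((j : ZMod 3) - (((i : ℕ) + 1 : ℕ) : ZMod 3)) •
                Finsupp.single (Sum.inr (Sum.inr ⟨(i : ℕ) + 1, h⟩)) 1
            else 0)

/-- The number of 1-dimensional non-free summands of `(V, D)` (with `D³ = 0`):
`dim ker D / (ker D ∩ im D)`. -/
noncomputable def numJ1 (j : ℕ) (ε : ZMod 3) : ℕ :=
  Module.finrank (ZMod 3)
    (@HasQuotient.Quotient ↥(LinearMap.ker (D19 j ε))
      (Submodule (ZMod 3) ↥(LinearMap.ker (D19 j ε))) Submodule.hasQuotient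
      (Submodule.comap (LinearMap.ker (D19 j ε)).subtype
        (LinearMap.ker (D19 j ε) ⊓ LinearMap.range (D19 j ε))))

/-- The number of 2-dimensional non-free summands of `(V, D)` (with `D³ = 0`):
`dim (ker D ∩ im D) / im D²`. -/
noncomputable def numJ2 (j : ℕ) (ε : ZMod 3) : ℕ :=
  Module.finrank (ZMod 3)
    (@HasQuotient.Quotient ↥(LinearMap.ker (D19 j ε) ⊓ LinearMap.range (D19 j ε))
      (Submodule (ZMod 3) ↥(LinearMap.ker (D19 j ε) ⊓ LinearMap.range (D19 j ε)))
      Submodule.hasQuotient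
      (Submodule.comap (LinearMap.ker (D19 j ε) ⊓ LinearMap.range (D19 j ε)).subtype
        (LinearMap.range ((D19 j ε) ∘ₗ (D19 j ε)))))


section Infra

open Finsupp

variable {j : ℕ} {ε : ZMod 3}

/-- The section map: `S b_{i+1} = (j+ε-i)·b_i`, `S c_{i+1} = (j-i)·c_i`, zero on
`a₀`, `b₁`, `c₁`. -/
noncomputable def S19 (j : ℕ) (ε : ZMod 3) :
    ((Unit ⊕ ℕ ⊕ Fin j) →₀ ZMod 3) →ₗ[ZMod 3] ((Unit ⊕ ℕ ⊕ Fin j) →₀ ZMod 3) :=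
  Finsupp.lsum (ZMod 3) fun idx =>
    LinearMap.toSpanSingleton (ZMod 3) ((Unit ⊕ ℕ ⊕ Fin j) →₀ ZMod 3)
      (match idx with
        | Sum.inl _ => 0
        | Sum.inr (Sum.inl 0) => 0
        | Sum.inr (Sum.inl (n + 1)) =>
            ((j : ZMod 3) + ε - ((n + 1 : ℕ) : ZMod 3)) •
              Finsupp.single (Sum.inr (Sum.inl n)) 1
        | Sum.inr (Sum.inr i) =>
            if h : 0 < (i : ℕ) then
              ((j : ZMod 3) - ((i : ℕ) : ZMod 3)) •
                Finsupp.single (Sum.inr (Sum.inr ⟨(i : ℕ) - 1,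
                  (Nat.sub_le _ _).trans_lt i.isLt⟩)) 1
            else 0)

lemma D_single_a (hj0 : 0 < j) (r : ZMod 3) :
    D19 j ε (Finsupp.single (Sum.inl ()) r) =
      r • (((j : ZMod 3) + ε) • Finsupp.single (Sum.inr (Sum.inl 0)) 1 +
        (j : ZMod 3) • Finsupp.single (Sum.inr (Sum.inr ⟨0, hj0⟩)) 1) := by
  simp only [D19, Finsupp.lsum_single, LinearMap.toSpanSingleton_apply, dif_pos hj0]

lemma D_single_b (n : ℕ) (r : ZMod 3) :
    D19 j ε (Finsupp.single (Sum.inr (Sum.inl n)) r) =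
      r • (((j : ZMod 3) + ε - ((n + 1 : ℕ) : ZMod 3)) •
        Finsupp.single (Sum.inr (Sum.inl (n + 1))) 1) := by
  simp only [D19, Finsupp.lsum_single, LinearMap.toSpanSingleton_apply]

lemma D_single_c (m : ℕ) (hm : m < j) (r : ZMod 3) :
    D19 j ε (Finsupp.single (Sum.inr (Sum.inr ⟨m, hm⟩)) r) =
      r • (if h2 : m + 1 < j then
        ((j : ZMod 3) - ((m + 1 : ℕ) : ZMod 3)) •
          Finsupp.single (Sum.inr (Sum.inr ⟨m + 1, h2⟩)) 1
      else 0) := by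
  simp only [D19, Finsupp.lsum_single, LinearMap.toSpanSingleton_apply]

lemma S_single_a (r : ZMod 3) : S19 j ε (Finsupp.single (Sum.inl ()) r) = 0 := by
  simp [S19, Finsupp.lsum_single, LinearMap.toSpanSingleton_apply]

lemma S_single_b0 (r : ZMod 3) :
    S19 j ε (Finsupp.single (Sum.inr (Sum.inl 0)) r) = 0 := by
  simp [S19, Finsupp.lsum_single, LinearMap.toSpanSingleton_apply]

lemma S_single_bs (n : ℕ) (r : ZMod 3) :
    S19 j ε (Finsupp.single (Sum.inr (Sum.inl (n + 1))) r) =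
      r • (((j : ZMod 3) + ε - ((n + 1 : ℕ) : ZMod 3)) •
        Finsupp.single (Sum.inr (Sum.inl n)) 1) := by
  simp only [S19, Finsupp.lsum_single, LinearMap.toSpanSingleton_apply]

lemma S_single_c0 (h : 0 < j) (r : ZMod 3) :
    S19 j ε (Finsupp.single (Sum.inr (Sum.inr ⟨0, h⟩)) r) = 0 := by
  simp [S19, Finsupp.lsum_single, LinearMap.toSpanSingleton_apply]

lemma S_single_cs (m : ℕ) (hm : m + 1 < j) (r : ZMod 3) :
    S19 j ε (Finsupp.single (Sum.inr (Sum.inr ⟨m + 1, hm⟩)) r) =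
      r • (((j : ZMod 3) - ((m + 1 : ℕ) : ZMod 3)) •
        Finsupp.single (Sum.inr (Sum.inr ⟨m, Nat.lt_of_succ_lt hm⟩)) 1) := by
  simp only [S19, Finsupp.lsum_single, LinearMap.toSpanSingleton_apply]
  norm_num

/-! coefficient formulas -/

lemma D_app_a (hj0 : 0 < j) (x : (Unit ⊕ ℕ ⊕ Fin j) →₀ ZMod 3) :
    D19 j ε x (Sum.inl ()) = 0 := by
  induction x using Finsupp.induction_linear with
  | zero => simp
  | add f g hf hg => simp [hf, hg]
  | single idx r =>
    rcases idx with ⟨⟩ | n | ⟨m, hm⟩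
    · rw [D_single_a hj0]; simp [Finsupp.single_apply]
    · rw [D_single_b]; simp [Finsupp.single_apply]
    · rw [D_single_c m hm]; split_ifs <;> simp [Finsupp.single_apply]

lemma D_app_b0 (hj0 : 0 < j) (x : (Unit ⊕ ℕ ⊕ Fin j) →₀ ZMod 3) :
    D19 j ε x (Sum.inr (Sum.inl 0)) = ((j : ZMod 3) + ε) * x (Sum.inl ()) := by
  induction x using Finsupp.induction_linear with
  | zero => simp
  | add f g hf hg => simp [hf, hg, mul_add]
  | single idx r =>
    rcases idx with ⟨⟩ | n | ⟨m, hm⟩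
    · rw [D_single_a hj0]; simp [Finsupp.single_apply]; ring
    · rw [D_single_b]; simp [Finsupp.single_apply]
    · rw [D_single_c m hm]; split_ifs <;> simp [Finsupp.single_apply]

lemma D_app_bs (hj0 : 0 < j) (x : (Unit ⊕ ℕ ⊕ Fin j) →₀ ZMod 3) (n : ℕ) :
    D19 j ε x (Sum.inr (Sum.inl (n + 1))) =
      ((j : ZMod 3) + ε - ((n + 1 : ℕ) : ZMod 3)) * x (Sum.inr (Sum.inl n)) := by
  induction x using Finsupp.induction_linear with
  | zero => simp
  | add f g hf hg => simp [hf, hg, mul_add]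
  | single idx r =>
    rcases idx with ⟨⟩ | n' | ⟨m, hm⟩
    · rw [D_single_a hj0]; simp [Finsupp.single_apply]
    · rw [D_single_b]
      rcases eq_or_ne n' n with rfl | hne
      · simp [Finsupp.single_apply]; ring
      · simp [Finsupp.single_apply, hne, (by omega : ¬ (n' + 1 = n + 1))]
    · rw [D_single_c m hm]; split_ifs <;> simp [Finsupp.single_apply]

lemma D_app_c0 (hj0 : 0 < j) (x : (Unit ⊕ ℕ ⊕ Fin j) →₀ ZMod 3) :
    D19 j ε x (Sum.inr (Sum.inr ⟨0, hj0⟩)) = (j : ZMod 3) * x (Sum.inl ()) := by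
  induction x using Finsupp.induction_linear with
  | zero => simp
  | add f g hf hg => simp [hf, hg, mul_add]
  | single idx r =>
    rcases idx with ⟨⟩ | n | ⟨m, hm⟩
    · rw [D_single_a hj0]; simp [Finsupp.single_apply]; ring
    · rw [D_single_b]; simp [Finsupp.single_apply]
    · rw [D_single_c m hm]; split_ifs <;> simp [Finsupp.single_apply]

lemma D_app_cs (x : (Unit ⊕ ℕ ⊕ Fin j) →₀ ZMod 3) (m : ℕ) (hm : m + 1 < j) :
    D19 j ε x (Sum.inr (Sum.inr ⟨m + 1, hm⟩)) =
      ((j : ZMod 3) - ((m + 1 : ℕ) : ZMod 3)) *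
        x (Sum.inr (Sum.inr ⟨m, Nat.lt_of_succ_lt hm⟩)) := by
  induction x using Finsupp.induction_linear with
  | zero => simp
  | add f g hf hg => simp [hf, hg, mul_add]
  | single idx r =>
    rcases idx with ⟨⟩ | n | ⟨m', hm'⟩
    · rw [D_single_a (by omega)]; simp [Finsupp.single_apply]
    · rw [D_single_b]; simp [Finsupp.single_apply]
    · rw [D_single_c m' hm']
      rcases eq_or_ne m' m with rfl | hne
      · simp [Finsupp.single_apply, dif_pos hm]; ring
      · split_ifs <;>
          simp [Finsupp.single_apply, hne, (by omega : ¬ (m' + 1 = m + 1))]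

lemma S_app_a (hj0 : 0 < j) (x : (Unit ⊕ ℕ ⊕ Fin j) →₀ ZMod 3) :
    S19 j ε x (Sum.inl ()) = 0 := by
  induction x using Finsupp.induction_linear with
  | zero => simp
  | add f g hf hg => simp [hf, hg]
  | single idx r =>
    rcases idx with ⟨⟩ | n | ⟨m, hm⟩
    · rw [S_single_a]; simp
    · rcases n with _ | n
      · rw [S_single_b0]; simp
      · rw [S_single_bs]; simp [Finsupp.single_apply]
    · rcases m with _ | m
      · rw [show (⟨0, hm⟩ : Fin j) = ⟨0, hj0⟩ from rfl, S_single_c0 hj0]; simp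
      · rw [S_single_cs m hm]; simp [Finsupp.single_apply]

lemma S_app_b (hj0 : 0 < j) (x : (Unit ⊕ ℕ ⊕ Fin j) →₀ ZMod 3) (n : ℕ) :
    S19 j ε x (Sum.inr (Sum.inl n)) =
      ((j : ZMod 3) + ε - ((n + 1 : ℕ) : ZMod 3)) * x (Sum.inr (Sum.inl (n + 1))) := by
  induction x using Finsupp.induction_linear with
  | zero => simp
  | add f g hf hg => simp [hf, hg, mul_add]
  | single idx r =>
    rcases idx with ⟨⟩ | n' | ⟨m, hm⟩
    · rw [S_single_a]; simp [Finsupp.single_apply]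
    · rcases n' with _ | n'
      · rw [S_single_b0]; simp [Finsupp.single_apply]
      · rw [S_single_bs]
        rcases eq_or_ne n' n with rfl | hne
        · simp [Finsupp.single_apply]; ring
        · simp [Finsupp.single_apply, hne, (by omega : ¬ (n' + 1 = n + 1))]
    · rcases m with _ | m
      · rw [show (⟨0, hm⟩ : Fin j) = ⟨0, hj0⟩ from rfl, S_single_c0 hj0]
        simp [Finsupp.single_apply]
      · rw [S_single_cs m hm]; simp [Finsupp.single_apply]

lemma S_app_c (hj0 : 0 < j) (x : (Unit ⊕ ℕ ⊕ Fin j) →₀ ZMod 3) (m : ℕ) (hm : m < j) :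
    S19 j ε x (Sum.inr (Sum.inr ⟨m, hm⟩)) =
      if h2 : m + 1 < j then
        ((j : ZMod 3) - ((m + 1 : ℕ) : ZMod 3)) * x (Sum.inr (Sum.inr ⟨m + 1, h2⟩))
      else 0 := by
  induction x using Finsupp.induction_linear with
  | zero => split_ifs <;> simp
  | add f g hf hg =>
    by_cases h2 : m + 1 < j
    · simp only [map_add, Finsupp.add_apply, hf, hg, dif_pos h2, mul_add]
    · simp only [map_add, Finsupp.add_apply, hf, hg, dif_neg h2, add_zero]
  | single idx r =>
    rcases idx with ⟨⟩ | n' | ⟨p, hp⟩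
    · rw [S_single_a]; split_ifs <;> simp [Finsupp.single_apply]
    · rcases n' with _ | n'
      · rw [S_single_b0]; split_ifs <;> simp [Finsupp.single_apply]
      · rw [S_single_bs]; split_ifs <;> simp [Finsupp.single_apply]
    · rcases p with _ | p
      · rw [show (⟨0, hp⟩ : Fin j) = ⟨0, hj0⟩ from rfl, S_single_c0 hj0]
        split_ifs <;> simp [Finsupp.single_apply]
      · rw [S_single_cs p hp]
        rcases eq_or_ne p m with rfl | hne
        · simp [Finsupp.single_apply, dif_pos hp]; ring
        · by_cases h2 : m + 1 < j <;>
            simp [Finsupp.single_apply, h2, hne, (by omega : ¬ (p + 1 = m + 1))]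

end Infra

section Recon

open Finsupp

variable {j : ℕ} {ε : ZMod 3}

lemma zc {γ r : ZMod 3} (hγ : γ ≠ 0) (h : γ * r = 0) : r = 0 := by
  rcases mul_eq_zero.mp h with h | h
  · exact absurd h hγ
  · exact h

lemma ztriple (γ r : ZMod 3) : (γ - 2) * ((γ - 1) * (γ * r)) = 0 := by
  have : (γ - 2) * ((γ - 1) * γ) = 0 := by revert γ; decide
  calc (γ - 2) * ((γ - 1) * (γ * r)) = ((γ - 2) * ((γ - 1) * γ)) * r := by ring
  _ = 0 := by rw [this, zero_mul]

lemma zsq {γ : ZMod 3} (h : γ ≠ 0) (r : ZMod 3) : γ * (γ * r) = r := by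
  have : γ * γ = 1 := by revert h; revert γ; decide
  rw [← mul_assoc, this, one_mul]

lemma cast_s1 (A : ZMod 3) (n : ℕ) :
    A - ((n + 1 + 1 : ℕ) : ZMod 3) = (A - ((n + 1 : ℕ) : ZMod 3)) - 1 := by
  push_cast; ring

lemma cast_s2 (A : ZMod 3) (n : ℕ) :
    A - ((n + 1 + 2 : ℕ) : ZMod 3) = (A - ((n + 1 : ℕ) : ZMod 3)) - 2 := by
  push_cast; ring

/-- if `j ≡ m+1 mod 3` and `m+1 < j` then `m+4 ≤ j`. -/
lemma dvd_step {m : ℕ} (h : (j : ZMod 3) - ((m + 1 : ℕ) : ZMod 3) = 0)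
    (hm : m + 1 < j) : m + 4 ≤ j := by
  have h1 : ((j - (m + 1) : ℕ) : ZMod 3) = 0 := by
    rw [Nat.cast_sub (by omega)]
    rw [sub_eq_zero] at h ⊢
    exact h
  have h2 := (ZMod.natCast_eq_zero_iff _ 3).mp h1
  have h3 := Nat.le_of_dvd (by omega) h2
  omega

/-- ker facts -/
lemma kfact_b (hj0 : 0 < j) {x : (Unit ⊕ ℕ ⊕ Fin j) →₀ ZMod 3}
    (hx : D19 j ε x = 0) (n : ℕ) :
    ((j : ZMod 3) + ε - ((n + 1 : ℕ) : ZMod 3)) * x (Sum.inr (Sum.inl n)) = 0 := by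
  have h := DFunLike.congr_fun hx (Sum.inr (Sum.inl (n + 1)))
  rwa [D_app_bs hj0, Finsupp.coe_zero, Pi.zero_apply] at h

lemma kfact_c {x : (Unit ⊕ ℕ ⊕ Fin j) →₀ ZMod 3}
    (hx : D19 j ε x = 0) (m : ℕ) (hm : m + 1 < j) :
    ((j : ZMod 3) - ((m + 1 : ℕ) : ZMod 3)) *
      x (Sum.inr (Sum.inr ⟨m, Nat.lt_of_succ_lt hm⟩)) = 0 := by
  have h := DFunLike.congr_fun hx (Sum.inr (Sum.inr ⟨m + 1, hm⟩))
  rwa [D_app_cs, Finsupp.coe_zero, Pi.zero_apply] at h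

lemma kfact_a1 (hj0 : 0 < j) {x : (Unit ⊕ ℕ ⊕ Fin j) →₀ ZMod 3}
    (hx : D19 j ε x = 0) : ((j : ZMod 3) + ε) * x (Sum.inl ()) = 0 := by
  have h := DFunLike.congr_fun hx (Sum.inr (Sum.inl 0))
  rwa [D_app_b0 hj0, Finsupp.coe_zero, Pi.zero_apply] at h

lemma kfact_a2 (hj0 : 0 < j) {x : (Unit ⊕ ℕ ⊕ Fin j) →₀ ZMod 3}
    (hx : D19 j ε x = 0) : (j : ZMod 3) * x (Sum.inl ()) = 0 := by
  have h := DFunLike.congr_fun hx (Sum.inr (Sum.inr ⟨0, hj0⟩))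
  rwa [D_app_c0 hj0, Finsupp.coe_zero, Pi.zero_apply] at h

/-- break-point coefficients of a kernel element vanish (b-tail). -/
lemma ker_break_b (hj0 : 0 < j) {x : (Unit ⊕ ℕ ⊕ Fin j) →₀ ZMod 3}
    (hx : D19 j ε x = 0) (n : ℕ)
    (hγ : (j : ZMod 3) + ε - ((n + 1 : ℕ) : ZMod 3) = 0) :
    x (Sum.inr (Sum.inl (n + 1))) = 0 := by
  have h := kfact_b hj0 hx (n + 1)
  rw [cast_s1, hγ] at h
  exact zc (by decide) h

lemma ker_break_c (hj0 : 0 < j) {x : (Unit ⊕ ℕ ⊕ Fin j) →₀ ZMod 3}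
    (hx : D19 j ε x = 0) (m : ℕ) (hm : m + 1 < j)
    (hγ : (j : ZMod 3) - ((m + 1 : ℕ) : ZMod 3) = 0) :
    x (Sum.inr (Sum.inr ⟨m + 1, hm⟩)) = 0 := by
  have h4 := dvd_step hγ hm
  have h := kfact_c hx (m + 1) (by omega)
  rw [cast_s1, hγ] at h
  exact zc (by decide) h

/-- master reconstruction: `D (S x) = x` for `x` vanishing on `a₀, b₁, c₁` and at
the break points. -/
lemma DS_eq (hj : 3 ≤ j) (x : (Unit ⊕ ℕ ⊕ Fin j) →₀ ZMod 3)
    (h1 : x (Sum.inl ()) = 0)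
    (h2 : x (Sum.inr (Sum.inl 0)) = 0)
    (h3 : x (Sum.inr (Sum.inr ⟨0, by omega⟩)) = 0)
    (hb : ∀ n : ℕ, (j : ZMod 3) + ε - ((n + 1 : ℕ) : ZMod 3) = 0 →
      x (Sum.inr (Sum.inl (n + 1))) = 0)
    (hc : ∀ (m : ℕ) (h : m + 1 < j), (j : ZMod 3) - ((m + 1 : ℕ) : ZMod 3) = 0 →
      x (Sum.inr (Sum.inr ⟨m + 1, h⟩)) = 0) :
    D19 j ε (S19 j ε x) = x := by
  have hj0 : 0 < j := by omega
  ext k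
  rcases k with ⟨⟩ | n | ⟨m, hm⟩
  · rw [D_app_a hj0, h1]
  · rcases n with _ | n
    · rw [D_app_b0 hj0, S_app_a hj0, mul_zero, h2]
    · rw [D_app_bs hj0, S_app_b hj0]
      by_cases hγ : (j : ZMod 3) + ε - ((n + 1 : ℕ) : ZMod 3) = 0
      · rw [hγ, hb n hγ, zero_mul]
      · exact zsq hγ _
  · rcases m with _ | m
    · rw [show (⟨0, hm⟩ : Fin j) = ⟨0, by omega⟩ from rfl, D_app_c0 hj0,
        S_app_a hj0, mul_zero]
      exact h3.symm
    · rw [D_app_cs, S_app_c hj0 _ _ (Nat.lt_of_succ_lt hm), dif_pos hm]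
      by_cases hγ : (j : ZMod 3) - ((m + 1 : ℕ) : ZMod 3) = 0
      · rw [hγ, hc m hm hγ, zero_mul]
      · exact zsq hγ _

/-- `D³ = 0`. -/
lemma D3 (hj : 3 ≤ j) (v : (Unit ⊕ ℕ ⊕ Fin j) →₀ ZMod 3) :
    D19 j ε (D19 j ε (D19 j ε v)) = 0 := by
  have hj0 : 0 < j := by omega
  ext k
  rw [Finsupp.coe_zero, Pi.zero_apply]
  rcases k with ⟨⟩ | n | ⟨m, hm⟩
  · rw [D_app_a hj0]
  · rcases n with _ | n
    · rw [D_app_b0 hj0, D_app_a hj0, mul_zero]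
    · rcases n with _ | n
      · rw [D_app_bs hj0, D_app_b0 hj0, D_app_a hj0, mul_zero, mul_zero]
      · rcases n with _ | n
        · rw [D_app_bs hj0, D_app_bs hj0, D_app_b0 hj0]
          push_cast
          linear_combination ztriple ((j : ZMod 3) + ε) (v (Sum.inl ()))
        · rw [D_app_bs hj0, D_app_bs hj0, D_app_bs hj0]
          push_cast
          linear_combination
            ztriple ((j : ZMod 3) + ε - ((n : ZMod 3) + 1)) (v (Sum.inr (Sum.inl n)))
  · rcases m with _ | m
    · rw [D_app_c0 hj0, D_app_a hj0, mul_zero]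
    · rcases m with _ | m
      · rw [D_app_cs, D_app_c0 hj0, D_app_a hj0, mul_zero, mul_zero]
      · rcases m with _ | m
        · rw [D_app_cs, D_app_cs, D_app_c0 hj0]
          push_cast
          linear_combination ztriple ((j : ZMod 3)) (v (Sum.inl ()))
        · rw [D_app_cs, D_app_cs, D_app_cs]
          push_cast
          linear_combination
            ztriple ((j : ZMod 3) - ((m : ZMod 3) + 1))
              (v (Sum.inr (Sum.inr ⟨m, by omega⟩)))

end Recon

section Memb

open Finsupp

variable {j : ℕ} {ε : ZMod 3}

lemma mem_range_D (hj : 3 ≤ j) (x : (Unit ⊕ ℕ ⊕ Fin j) →₀ ZMod 3)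
    (hx : D19 j ε x = 0) (t : ZMod 3)
    (h1 : x (Sum.inl ()) = 0)
    (h2 : x (Sum.inr (Sum.inl 0)) = ((j : ZMod 3) + ε) * t)
    (h3 : x (Sum.inr (Sum.inr ⟨0, by omega⟩)) = (j : ZMod 3) * t)
    (h4 : ((j : ZMod 3) + ε) * (((j : ZMod 3) + ε) - 1) * t = 0)
    (h5 : (j : ZMod 3) * ((j : ZMod 3) - 1) * t = 0) :
    x ∈ LinearMap.range (D19 j ε) := by
  have hj0 : 0 < j := by omega
  set w : (Unit ⊕ ℕ ⊕ Fin j) →₀ ZMod 3 := Finsupp.single (Sum.inl ()) t with hw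
  have hwa : w (Sum.inl ()) = t := Finsupp.single_eq_same
  have hwb : ∀ n, w (Sum.inr (Sum.inl n)) = 0 := fun n =>
    Finsupp.single_eq_of_ne (by simp)
  have hwc : ∀ (i : Fin j), w (Sum.inr (Sum.inr i)) = 0 := fun i =>
    Finsupp.single_eq_of_ne (by simp)
  have hDDw : D19 j ε (D19 j ε w) = 0 := by
    ext k
    rw [Finsupp.coe_zero, Pi.zero_apply]
    rcases k with ⟨⟩ | n | ⟨m, hm⟩
    · rw [D_app_a hj0]
    · rcases n with _ | n
      · rw [D_app_b0 hj0, D_app_a hj0, mul_zero]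
      · rcases n with _ | n
        · rw [D_app_bs hj0, D_app_b0 hj0, hwa]
          push_cast
          linear_combination h4
        · rw [D_app_bs hj0, D_app_bs hj0, hwb, mul_zero, mul_zero]
    · rcases m with _ | m
      · rw [D_app_c0 hj0, D_app_a hj0, mul_zero]
      · rcases m with _ | m
        · rw [D_app_cs, D_app_c0 hj0, hwa]
          push_cast
          linear_combination h5
        · rw [D_app_cs, D_app_cs, hwc, mul_zero, mul_zero]
  set x' := x - D19 j ε w with hx'def
  have hxk : D19 j ε x' = 0 := by rw [hx'def, map_sub, hx, hDDw, zero_sub, neg_zero]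
  refine ⟨S19 j ε x' + w, ?_⟩
  rw [map_add, DS_eq hj x' ?_ ?_ ?_ ?_ ?_]
  · rw [hx'def, sub_add_cancel]
  · rw [hx'def, Finsupp.sub_apply, h1, D_app_a hj0, sub_zero]
  · rw [hx'def, Finsupp.sub_apply, h2, D_app_b0 hj0, hwa, sub_self]
  · rw [hx'def, Finsupp.sub_apply, h3, D_app_c0 hj0, hwa, sub_self]
  · exact fun n hγ => ker_break_b hj0 hxk n hγ
  · exact fun m hm hγ => ker_break_c hj0 hxk m hm hγ

lemma mem_range_D2 (hj : 3 ≤ j) (x : (Unit ⊕ ℕ ⊕ Fin j) →₀ ZMod 3)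
    (hx : D19 j ε x = 0) (t : ZMod 3)
    (h1 : x (Sum.inl ()) = 0)
    (h2 : x (Sum.inr (Sum.inl 0)) = 0)
    (h3 : x (Sum.inr (Sum.inr ⟨0, by omega⟩)) = 0)
    (h4 : x (Sum.inr (Sum.inl 1)) = ((j : ZMod 3) + ε) * (((j : ZMod 3) + ε) - 1) * t)
    (h5 : x (Sum.inr (Sum.inr ⟨1, by omega⟩)) = (j : ZMod 3) * ((j : ZMod 3) - 1) * t) :
    x ∈ LinearMap.range ((D19 j ε) ∘ₗ (D19 j ε)) := by
  have hj0 : 0 < j := by omega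
  set w : (Unit ⊕ ℕ ⊕ Fin j) →₀ ZMod 3 := Finsupp.single (Sum.inl ()) t with hw
  have hwa : w (Sum.inl ()) = t := Finsupp.single_eq_same
  have hwb : ∀ n, w (Sum.inr (Sum.inl n)) = 0 := fun n =>
    Finsupp.single_eq_of_ne (by simp)
  have hwc : ∀ (i : Fin j), w (Sum.inr (Sum.inr i)) = 0 := fun i =>
    Finsupp.single_eq_of_ne (by simp)
  set x' := x - D19 j ε (D19 j ε w) with hx'def
  have hxk : D19 j ε x' = 0 := by
    rw [hx'def, map_sub, hx, D3 hj w, zero_sub, neg_zero]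
  -- low coefficients of x'
  have hx'1 : x' (Sum.inl ()) = 0 := by
    rw [hx'def, Finsupp.sub_apply, h1, D_app_a hj0, sub_zero]
  have hx'2 : x' (Sum.inr (Sum.inl 0)) = 0 := by
    rw [hx'def, Finsupp.sub_apply, h2, D_app_b0 hj0, D_app_a hj0, mul_zero, sub_zero]
  have hx'3 : ∀ (h : 0 < j), x' (Sum.inr (Sum.inr ⟨0, h⟩)) = 0 := by
    intro h
    rw [hx'def, Finsupp.sub_apply, D_app_c0 hj0, D_app_a hj0, mul_zero, sub_zero]
    exact h3
  have hx'4 : x' (Sum.inr (Sum.inl 1)) = 0 := by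
    rw [hx'def, Finsupp.sub_apply, h4]
    rw [show (1 : ℕ) = 0 + 1 from rfl, D_app_bs hj0, D_app_b0 hj0, hwa]
    push_cast
    ring
  have hx'5 : ∀ (h : 1 < j), x' (Sum.inr (Sum.inr ⟨1, h⟩)) = 0 := by
    intro h
    rw [hx'def, Finsupp.sub_apply]
    rw [show (⟨1, h⟩ : Fin j) = ⟨0 + 1, h⟩ from rfl, D_app_cs, D_app_c0 hj0, hwa]
    rw [show x (Sum.inr (Sum.inr ⟨0 + 1, h⟩)) =
      (j : ZMod 3) * ((j : ZMod 3) - 1) * t from h5]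
    push_cast
    ring
  -- DS_eq for x'
  have e2 : D19 j ε (S19 j ε x') = x' :=
    DS_eq hj x' hx'1 hx'2 (hx'3 _)
      (fun n hγ => ker_break_b hj0 hxk n hγ)
      (fun m hm hγ => ker_break_c hj0 hxk m hm hγ)
  -- DS_eq for S x'
  have e1 : D19 j ε (S19 j ε (S19 j ε x')) = S19 j ε x' := by
    apply DS_eq hj
    · exact S_app_a hj0 _
    · rw [S_app_b hj0, hx'4, mul_zero]
    · rw [S_app_c hj0 x' 0 (by omega), dif_pos (by omega : 0 + 1 < j),
        hx'5 (by omega), mul_zero]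
    · intro n hγ
      rw [S_app_b hj0]
      have hk := kfact_b hj0 hxk (n + 1 + 1)
      rw [show ((j : ZMod 3) + ε - ((n + 1 + 1 + 1 : ℕ) : ZMod 3)) =
        ((j : ZMod 3) + ε - ((n + 1 : ℕ) : ZMod 3)) - 2 from by push_cast; ring,
        hγ] at hk
      rw [zc (by decide) hk, mul_zero]
    · intro m hm hγ
      have hj4 := dvd_step hγ hm
      rw [S_app_c hj0 x' (m + 1) hm, dif_pos (by omega : m + 1 + 1 < j)]
      have hk := kfact_c hxk (m + 1 + 1) (by omega)
      rw [show ((j : ZMod 3) - ((m + 1 + 1 + 1 : ℕ) : ZMod 3)) =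
        ((j : ZMod 3) - ((m + 1 : ℕ) : ZMod 3)) - 2 from by push_cast; ring,
        hγ] at hk
      rw [zc (by decide) hk, mul_zero]
  refine ⟨S19 j ε (S19 j ε x') + w, ?_⟩
  simp only [LinearMap.comp_apply, map_add]
  rw [e1, e2, hx'def, sub_add_cancel]

end Memb

section Cases

open Finsupp LinearMap

variable {j : ℕ} {ε : ZMod 3}

lemma finrank_quot_eq_zero {M : Type} [AddCommGroup M] [Module (ZMod 3) M]
    (q : Submodule (ZMod 3) M) (h : q = ⊤) :
    Module.finrank (ZMod 3) (M ⧸ q) = 0 := by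
  haveI : Subsingleton (M ⧸ q) := Submodule.Quotient.subsingleton_iff.mpr h
  exact Module.finrank_zero_of_subsingleton

lemma finrank_quot_eq_one {M : Type} [AddCommGroup M] [Module (ZMod 3) M]
    (q : Submodule (ZMod 3) M) (φ : M →ₗ[ZMod 3] ZMod 3)
    (hker : LinearMap.ker φ = q) (hsurj : Function.Surjective φ) :
    Module.finrank (ZMod 3) (M ⧸ q) = 1 := by
  rw [← hker, (φ.quotKerEquivOfSurjective hsurj).finrank_eq, Module.finrank_self]

lemma numJ1_zero_of (h : ∀ x : (Unit ⊕ ℕ ⊕ Fin j) →₀ ZMod 3,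
    D19 j ε x = 0 → x ∈ LinearMap.range (D19 j ε)) : numJ1 j ε = 0 := by
  unfold numJ1
  apply finrank_quot_eq_zero
  rw [Submodule.comap_subtype_eq_top]
  intro x hx
  exact Submodule.mem_inf.mpr ⟨hx, h x (LinearMap.mem_ker.mp hx)⟩

lemma numJ2_zero_of (h : ∀ x : (Unit ⊕ ℕ ⊕ Fin j) →₀ ZMod 3,
    D19 j ε x = 0 → x ∈ LinearMap.range (D19 j ε) →
      x ∈ LinearMap.range ((D19 j ε) ∘ₗ (D19 j ε))) : numJ2 j ε = 0 := by
  unfold numJ2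
  apply finrank_quot_eq_zero
  rw [Submodule.comap_subtype_eq_top]
  intro x hx
  have hx' := Submodule.mem_inf.mp hx
  exact h x (LinearMap.mem_ker.mp hx'.1) hx'.2

/-- vanishing lemmas for kernel elements -/
lemma xa_zero1 (hj0 : 0 < j) {x : (Unit ⊕ ℕ ⊕ Fin j) →₀ ZMod 3}
    (hx : D19 j ε x = 0) (h : (j : ZMod 3) + ε ≠ 0) : x (Sum.inl ()) = 0 :=
  zc h (kfact_a1 hj0 hx)

lemma xa_zero2 (hj0 : 0 < j) {x : (Unit ⊕ ℕ ⊕ Fin j) →₀ ZMod 3}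
    (hx : D19 j ε x = 0) (h : (j : ZMod 3) ≠ 0) : x (Sum.inl ()) = 0 :=
  zc h (kfact_a2 hj0 hx)

lemma xb0_zero (hj0 : 0 < j) {x : (Unit ⊕ ℕ ⊕ Fin j) →₀ ZMod 3}
    (hx : D19 j ε x = 0) (h : (j : ZMod 3) + ε - 1 ≠ 0) :
    x (Sum.inr (Sum.inl 0)) = 0 := by
  have hk := kfact_b hj0 hx 0
  rw [show ((0 + 1 : ℕ) : ZMod 3) = 1 from by norm_num] at hk
  exact zc h hk

lemma xb1_zero (hj0 : 0 < j) {x : (Unit ⊕ ℕ ⊕ Fin j) →₀ ZMod 3}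
    (hx : D19 j ε x = 0) (h : (j : ZMod 3) + ε - 2 ≠ 0) :
    x (Sum.inr (Sum.inl 1)) = 0 := by
  have hk := kfact_b hj0 hx 1
  rw [show ((1 + 1 : ℕ) : ZMod 3) = 2 from by norm_num] at hk
  exact zc h hk

lemma xc0_zero (hj : 3 ≤ j) {x : (Unit ⊕ ℕ ⊕ Fin j) →₀ ZMod 3}
    (hx : D19 j ε x = 0) (h : (j : ZMod 3) - 1 ≠ 0) (h0 : 0 < j) :
    x (Sum.inr (Sum.inr ⟨0, h0⟩)) = 0 := by
  have hk := kfact_c hx 0 (by omega)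
  rw [show ((0 + 1 : ℕ) : ZMod 3) = 1 from by norm_num] at hk
  exact zc h hk

lemma xc1_zero (hj : 3 ≤ j) {x : (Unit ⊕ ℕ ⊕ Fin j) →₀ ZMod 3}
    (hx : D19 j ε x = 0) (h : (j : ZMod 3) - 2 ≠ 0) (h1 : 1 < j) :
    x (Sum.inr (Sum.inr ⟨1, h1⟩)) = 0 := by
  have hk := kfact_c hx 1 (by omega)
  rw [show ((1 + 1 : ℕ) : ZMod 3) = 2 from by norm_num] at hk
  exact zc h hk

/-- `D²a₀ = 0` when both products vanish. -/
lemma DDw_zero (hj : 3 ≤ j) (t : ZMod 3)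
    (h4 : ((j : ZMod 3) + ε) * (((j : ZMod 3) + ε) - 1) * t = 0)
    (h5 : (j : ZMod 3) * ((j : ZMod 3) - 1) * t = 0) :
    D19 j ε (D19 j ε (Finsupp.single (Sum.inl ()) t)) = 0 := by
  have hj0 : 0 < j := by omega
  set w : (Unit ⊕ ℕ ⊕ Fin j) →₀ ZMod 3 := Finsupp.single (Sum.inl ()) t with hw
  have hwa : w (Sum.inl ()) = t := Finsupp.single_eq_same
  have hwb : ∀ n, w (Sum.inr (Sum.inl n)) = 0 := fun n =>
    Finsupp.single_eq_of_ne (by simp)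
  have hwc : ∀ (i : Fin j), w (Sum.inr (Sum.inr i)) = 0 := fun i =>
    Finsupp.single_eq_of_ne (by simp)
  ext k
  rw [Finsupp.coe_zero, Pi.zero_apply]
  rcases k with ⟨⟩ | n | ⟨m, hm⟩
  · rw [D_app_a hj0]
  · rcases n with _ | n
    · rw [D_app_b0 hj0, D_app_a hj0, mul_zero]
    · rcases n with _ | n
      · rw [D_app_bs hj0, D_app_b0 hj0, hwa]
        push_cast
        linear_combination h4
      · rw [D_app_bs hj0, D_app_bs hj0, hwb, mul_zero, mul_zero]
  · rcases m with _ | m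
    · rw [D_app_c0 hj0, D_app_a hj0, mul_zero]
    · rcases m with _ | m
      · rw [D_app_cs, D_app_c0 hj0, hwa]
        push_cast
        linear_combination h5
      · rw [D_app_cs, D_app_cs, hwc, mul_zero, mul_zero]

end Cases

section Cases2

open Finsupp LinearMap

variable {j : ℕ} {ε : ZMod 3}

/-! ### numJ1 = 0 cases -/

lemma J1z_22 (hj : 3 ≤ j) (hA : (j : ZMod 3) + ε = 2) (hB : (j : ZMod 3) = 2) :
    numJ1 j ε = 0 := by
  have hj0 : 0 < j := by omega
  apply numJ1_zero_of
  intro x hx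
  refine mem_range_D hj x hx 0 ?_ ?_ ?_ ?_ ?_
  · exact xa_zero1 hj0 hx (by rw [hA]; decide)
  · rw [mul_zero]; exact xb0_zero hj0 hx (by rw [hA]; decide)
  · rw [mul_zero]; exact xc0_zero hj hx (by rw [hB]; decide) _
  · rw [mul_zero]
  · rw [mul_zero]

lemma J1z_10 (hj : 3 ≤ j) (hA : (j : ZMod 3) + ε = 1) (hB : (j : ZMod 3) = 0) :
    numJ1 j ε = 0 := by
  have hj0 : 0 < j := by omega
  apply numJ1_zero_of
  intro x hx
  refine mem_range_D hj x hx (x (Sum.inr (Sum.inl 0))) ?_ ?_ ?_ ?_ ?_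
  · exact xa_zero1 hj0 hx (by rw [hA]; decide)
  · rw [hA, one_mul]
  · rw [hB, zero_mul]; exact xc0_zero hj hx (by rw [hB]; decide) _
  · rw [hA]; exact (by decide : ∀ s : ZMod 3, (1 : ZMod 3) * (1 - 1) * s = 0) _
  · rw [hB]; exact (by decide : ∀ s : ZMod 3, (0 : ZMod 3) * (0 - 1) * s = 0) _

lemma J1z_01 (hj : 3 ≤ j) (hA : (j : ZMod 3) + ε = 0) (hB : (j : ZMod 3) = 1) :
    numJ1 j ε = 0 := by
  have hj0 : 0 < j := by omega
  apply numJ1_zero_of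
  intro x hx
  refine mem_range_D hj x hx (x (Sum.inr (Sum.inr ⟨0, hj0⟩))) ?_ ?_ ?_ ?_ ?_
  · exact xa_zero2 hj0 hx (by rw [hB]; decide)
  · rw [hA, zero_mul]; exact xb0_zero hj0 hx (by rw [hA]; decide)
  · rw [hB, one_mul]
  · rw [hA]; exact (by decide : ∀ s : ZMod 3, (0 : ZMod 3) * (0 - 1) * s = 0) _
  · rw [hB]; exact (by decide : ∀ s : ZMod 3, (1 : ZMod 3) * (1 - 1) * s = 0) _

lemma J1z_02 (hj : 3 ≤ j) (hA : (j : ZMod 3) + ε = 0) (hB : (j : ZMod 3) = 2) :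
    numJ1 j ε = 0 := by
  have hj0 : 0 < j := by omega
  apply numJ1_zero_of
  intro x hx
  refine mem_range_D hj x hx 0 ?_ ?_ ?_ ?_ ?_
  · exact xa_zero2 hj0 hx (by rw [hB]; decide)
  · rw [mul_zero]; exact xb0_zero hj0 hx (by rw [hA]; decide)
  · rw [mul_zero]; exact xc0_zero hj hx (by rw [hB]; decide) _
  · rw [mul_zero]
  · rw [mul_zero]

lemma J1z_20 (hj : 3 ≤ j) (hA : (j : ZMod 3) + ε = 2) (hB : (j : ZMod 3) = 0) :
    numJ1 j ε = 0 := by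
  have hj0 : 0 < j := by omega
  apply numJ1_zero_of
  intro x hx
  refine mem_range_D hj x hx 0 ?_ ?_ ?_ ?_ ?_
  · exact xa_zero1 hj0 hx (by rw [hA]; decide)
  · rw [mul_zero]; exact xb0_zero hj0 hx (by rw [hA]; decide)
  · rw [mul_zero]; exact xc0_zero hj hx (by rw [hB]; decide) _
  · rw [mul_zero]
  · rw [mul_zero]

/-! ### numJ1 = 1 cases -/

lemma J1o_00 (hj : 3 ≤ j) (hA : (j : ZMod 3) + ε = 0) (hB : (j : ZMod 3) = 0) :
    numJ1 j ε = 1 := by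
  have hj0 : 0 < j := by omega
  have hw : Finsupp.single (Sum.inl ()) (1 : ZMod 3) ∈ LinearMap.ker (D19 j ε) := by
    rw [LinearMap.mem_ker, D_single_a hj0, hA, hB, zero_smul, zero_smul, add_zero,
      smul_zero]
  unfold numJ1
  apply finrank_quot_eq_one _
    ((Finsupp.lapply (Sum.inl ())).comp (LinearMap.ker (D19 j ε)).subtype)
  · ext ⟨x, hx⟩
    have hxk : D19 j ε x = 0 := LinearMap.mem_ker.mp hx
    simp only [LinearMap.mem_ker, LinearMap.coe_comp, Function.comp_apply,
      Submodule.coe_subtype, Finsupp.lapply_apply, Submodule.mem_comap,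
      Submodule.mem_inf]
    constructor
    · intro h0
      refine ⟨hx, mem_range_D hj x hxk 0 h0 ?_ ?_ ?_ ?_⟩
      · rw [mul_zero]; exact xb0_zero hj0 hxk (by rw [hA]; decide)
      · rw [mul_zero]; exact xc0_zero hj hxk (by rw [hB]; decide) _
      · rw [mul_zero]
      · rw [mul_zero]
    · rintro ⟨-, y, hy⟩
      rw [← hy, D_app_a hj0]
  · intro r
    refine ⟨r • ⟨_, hw⟩, ?_⟩
    simp [Finsupp.lapply_apply]

lemma J1o_11 (hj : 3 ≤ j) (hA : (j : ZMod 3) + ε = 1) (hB : (j : ZMod 3) = 1) :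
    numJ1 j ε = 1 := by
  have hj0 : 0 < j := by omega
  have hw : Finsupp.single (Sum.inr (Sum.inl 0)) (1 : ZMod 3) ∈
      LinearMap.ker (D19 j ε) := by
    rw [LinearMap.mem_ker, D_single_b,
      show ((0 + 1 : ℕ) : ZMod 3) = 1 from by norm_num, hA, sub_self, zero_smul,
      smul_zero]
  unfold numJ1
  apply finrank_quot_eq_one _
    ((((Finsupp.lapply (Sum.inr (Sum.inl 0))) -
      (Finsupp.lapply (Sum.inr (Sum.inr ⟨0, hj0⟩))) :
        ((Unit ⊕ ℕ ⊕ Fin j) →₀ ZMod 3) →ₗ[ZMod 3] ZMod 3)).comp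
        (LinearMap.ker (D19 j ε)).subtype)
  · ext ⟨x, hx⟩
    have hxk : D19 j ε x = 0 := LinearMap.mem_ker.mp hx
    simp only [LinearMap.mem_ker, LinearMap.coe_comp, Function.comp_apply,
      Submodule.coe_subtype, LinearMap.sub_apply, Finsupp.lapply_apply,
      Submodule.mem_comap, Submodule.mem_inf]
    constructor
    · intro h0
      have he := sub_eq_zero.mp h0
      refine ⟨hx, mem_range_D hj x hxk (x (Sum.inr (Sum.inl 0))) ?_ ?_ ?_ ?_ ?_⟩
      · exact xa_zero1 hj0 hxk (by rw [hA]; decide)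
      · rw [hA, one_mul]
      · rw [hB, one_mul]; exact he.symm
      · rw [hA]; exact (by decide : ∀ s : ZMod 3, (1 : ZMod 3) * (1 - 1) * s = 0) _
      · rw [hB]; exact (by decide : ∀ s : ZMod 3, (1 : ZMod 3) * (1 - 1) * s = 0) _
    · rintro ⟨-, y, hy⟩
      rw [← hy, D_app_b0 hj0, D_app_c0 hj0, hA, hB, one_mul, sub_self]
  · intro r
    refine ⟨r • ⟨_, hw⟩, ?_⟩
    simp [Finsupp.lapply_apply, Finsupp.single_apply]

lemma J1o_21 (hj : 3 ≤ j) (hA : (j : ZMod 3) + ε = 2) (hB : (j : ZMod 3) = 1) :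
    numJ1 j ε = 1 := by
  have hj0 : 0 < j := by omega
  have hw : Finsupp.single (Sum.inr (Sum.inr (⟨0, hj0⟩ : Fin j))) (1 : ZMod 3) ∈
      LinearMap.ker (D19 j ε) := by
    rw [LinearMap.mem_ker, D_single_c 0 hj0, dif_pos (by omega : 0 + 1 < j),
      show ((0 + 1 : ℕ) : ZMod 3) = 1 from by norm_num, hB, sub_self, zero_smul,
      smul_zero]
  unfold numJ1
  apply finrank_quot_eq_one _
    ((Finsupp.lapply (Sum.inr (Sum.inr (⟨0, hj0⟩ : Fin j)))).comp
      (LinearMap.ker (D19 j ε)).subtype)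
  · ext ⟨x, hx⟩
    have hxk : D19 j ε x = 0 := LinearMap.mem_ker.mp hx
    simp only [LinearMap.mem_ker, LinearMap.coe_comp, Function.comp_apply,
      Submodule.coe_subtype, Finsupp.lapply_apply, Submodule.mem_comap,
      Submodule.mem_inf]
    constructor
    · intro h0
      refine ⟨hx, mem_range_D hj x hxk 0 ?_ ?_ ?_ ?_ ?_⟩
      · exact xa_zero2 hj0 hxk (by rw [hB]; decide)
      · rw [mul_zero]; exact xb0_zero hj0 hxk (by rw [hA]; decide)
      · rw [mul_zero]; exact h0
      · rw [mul_zero]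
      · rw [mul_zero]
    · rintro ⟨-, y, hy⟩
      have hb0 : x (Sum.inr (Sum.inl 0)) = 0 :=
        xb0_zero hj0 hxk (by rw [hA]; decide)
      rw [← hy, D_app_b0 hj0] at hb0
      have hyi : y (Sum.inl ()) = 0 := zc (by rw [hA]; decide) hb0
      rw [← hy, D_app_c0 hj0, hyi, mul_zero]
  · intro r
    refine ⟨r • ⟨_, hw⟩, ?_⟩
    simp [Finsupp.lapply_apply]

lemma J1o_12 (hj : 3 ≤ j) (hA : (j : ZMod 3) + ε = 1) (hB : (j : ZMod 3) = 2) :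
    numJ1 j ε = 1 := by
  have hj0 : 0 < j := by omega
  have hw : Finsupp.single (Sum.inr (Sum.inl 0)) (1 : ZMod 3) ∈
      LinearMap.ker (D19 j ε) := by
    rw [LinearMap.mem_ker, D_single_b,
      show ((0 + 1 : ℕ) : ZMod 3) = 1 from by norm_num, hA, sub_self, zero_smul,
      smul_zero]
  unfold numJ1
  apply finrank_quot_eq_one _
    ((Finsupp.lapply (Sum.inr (Sum.inl 0))).comp (LinearMap.ker (D19 j ε)).subtype)
  · ext ⟨x, hx⟩
    have hxk : D19 j ε x = 0 := LinearMap.mem_ker.mp hx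
    simp only [LinearMap.mem_ker, LinearMap.coe_comp, Function.comp_apply,
      Submodule.coe_subtype, Finsupp.lapply_apply, Submodule.mem_comap,
      Submodule.mem_inf]
    constructor
    · intro h0
      refine ⟨hx, mem_range_D hj x hxk 0 ?_ ?_ ?_ ?_ ?_⟩
      · exact xa_zero2 hj0 hxk (by rw [hB]; decide)
      · rw [mul_zero]; exact h0
      · rw [mul_zero]; exact xc0_zero hj hxk (by rw [hB]; decide) _
      · rw [mul_zero]
      · rw [mul_zero]
    · rintro ⟨-, y, hy⟩
      have hc0 : x (Sum.inr (Sum.inr ⟨0, hj0⟩)) = 0 :=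
        xc0_zero hj hxk (by rw [hB]; decide) _
      rw [← hy, D_app_c0 hj0] at hc0
      have hyi : y (Sum.inl ()) = 0 := zc (by rw [hB]; decide) hc0
      rw [← hy, D_app_b0 hj0, hyi, mul_zero]
  · intro r
    refine ⟨r • ⟨_, hw⟩, ?_⟩
    simp [Finsupp.lapply_apply]

end Cases2

section Cases3

open Finsupp LinearMap

variable {j : ℕ} {ε : ZMod 3}

/-! ### numJ2 = 0 cases -/

lemma J2z_00 (hj : 3 ≤ j) (hA : (j : ZMod 3) + ε = 0) (hB : (j : ZMod 3) = 0) :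
    numJ2 j ε = 0 := by
  have hj0 : 0 < j := by omega
  apply numJ2_zero_of
  rintro x hx ⟨y, hy⟩
  refine mem_range_D2 hj x hx 0 ?_ ?_ ?_ ?_ ?_
  · rw [← hy, D_app_a hj0]
  · rw [← hy, D_app_b0 hj0, hA, zero_mul]
  · rw [← hy, D_app_c0 hj0, hB, zero_mul]
  · rw [mul_zero]; exact xb1_zero hj0 hx (by rw [hA]; decide)
  · rw [mul_zero]; exact xc1_zero hj hx (by rw [hB]; decide) _

lemma J2z_21 (hj : 3 ≤ j) (hA : (j : ZMod 3) + ε = 2) (hB : (j : ZMod 3) = 1) :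
    numJ2 j ε = 0 := by
  have hj0 : 0 < j := by omega
  apply numJ2_zero_of
  rintro x hx ⟨y, hy⟩
  have hb0 : x (Sum.inr (Sum.inl 0)) = 0 := xb0_zero hj0 hx (by rw [hA]; decide)
  have hyi : y (Sum.inl ()) = 0 := by
    rw [← hy, D_app_b0 hj0] at hb0
    exact zc (by rw [hA]; decide) hb0
  refine mem_range_D2 hj x hx (2 * x (Sum.inr (Sum.inl 1))) ?_ ?_ ?_ ?_ ?_
  · rw [← hy, D_app_a hj0]
  · exact xb0_zero hj0 hx (by rw [hA]; decide)
  · rw [← hy, D_app_c0 hj0, hyi, mul_zero]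
  · rw [hA]; exact (by decide : ∀ s : ZMod 3, s = 2 * (2 - 1) * (2 * s)) _
  · rw [hB, xc1_zero hj hx (by rw [hB]; decide) (by omega)]
    exact (by decide : ∀ s : ZMod 3, (0 : ZMod 3) = 1 * (1 - 1) * (2 * s)) _

lemma J2z_02 (hj : 3 ≤ j) (hA : (j : ZMod 3) + ε = 0) (hB : (j : ZMod 3) = 2) :
    numJ2 j ε = 0 := by
  have hj0 : 0 < j := by omega
  apply numJ2_zero_of
  rintro x hx ⟨y, hy⟩
  refine mem_range_D2 hj x hx (2 * x (Sum.inr (Sum.inr ⟨1, by omega⟩))) ?_ ?_ ?_ ?_ ?_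
  · rw [← hy, D_app_a hj0]
  · rw [← hy, D_app_b0 hj0, hA, zero_mul]
  · exact xc0_zero hj hx (by rw [hB]; decide) _
  · rw [hA, xb1_zero hj0 hx (by rw [hA]; decide)]
    exact (by decide : ∀ s : ZMod 3, (0 : ZMod 3) = 0 * (0 - 1) * (2 * s)) _
  · rw [hB]; exact (by decide : ∀ s : ZMod 3, s = 2 * (2 - 1) * (2 * s)) _

lemma J2z_20 (hj : 3 ≤ j) (hA : (j : ZMod 3) + ε = 2) (hB : (j : ZMod 3) = 0) :
    numJ2 j ε = 0 := by
  have hj0 : 0 < j := by omega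
  apply numJ2_zero_of
  rintro x hx ⟨y, hy⟩
  refine mem_range_D2 hj x hx (2 * x (Sum.inr (Sum.inl 1))) ?_ ?_ ?_ ?_ ?_
  · rw [← hy, D_app_a hj0]
  · exact xb0_zero hj0 hx (by rw [hA]; decide)
  · rw [← hy, D_app_c0 hj0, hB, zero_mul]
  · rw [hA]; exact (by decide : ∀ s : ZMod 3, s = 2 * (2 - 1) * (2 * s)) _
  · rw [hB, xc1_zero hj hx (by rw [hB]; decide) (by omega)]
    exact (by decide : ∀ s : ZMod 3, (0 : ZMod 3) = 0 * (0 - 1) * (2 * s)) _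

lemma J2z_12 (hj : 3 ≤ j) (hA : (j : ZMod 3) + ε = 1) (hB : (j : ZMod 3) = 2) :
    numJ2 j ε = 0 := by
  have hj0 : 0 < j := by omega
  apply numJ2_zero_of
  rintro x hx ⟨y, hy⟩
  have hc0 : x (Sum.inr (Sum.inr ⟨0, hj0⟩)) = 0 :=
    xc0_zero hj hx (by rw [hB]; decide) _
  have hyi : y (Sum.inl ()) = 0 := by
    rw [← hy, D_app_c0 hj0] at hc0
    exact zc (by rw [hB]; decide) hc0
  refine mem_range_D2 hj x hx (2 * x (Sum.inr (Sum.inr ⟨1, by omega⟩))) ?_ ?_ ?_ ?_ ?_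
  · rw [← hy, D_app_a hj0]
  · rw [← hy, D_app_b0 hj0, hyi, mul_zero]
  · exact xc0_zero hj hx (by rw [hB]; decide) _
  · rw [hA, xb1_zero hj0 hx (by rw [hA]; decide)]
    exact (by decide : ∀ s : ZMod 3, (0 : ZMod 3) = 1 * (1 - 1) * (2 * s)) _
  · rw [hB]; exact (by decide : ∀ s : ZMod 3, s = 2 * (2 - 1) * (2 * s)) _

/-! ### numJ2 = 1 cases -/

lemma J2o_11 (hj : 3 ≤ j) (hA : (j : ZMod 3) + ε = 1) (hB : (j : ZMod 3) = 1) :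
    numJ2 j ε = 1 := by
  have hj0 : 0 < j := by omega
  have hwk : D19 j ε (Finsupp.single (Sum.inl ()) (1 : ZMod 3)) ∈
      LinearMap.ker (D19 j ε) ⊓ LinearMap.range (D19 j ε) := by
    refine Submodule.mem_inf.mpr ⟨?_, ⟨_, rfl⟩⟩
    rw [LinearMap.mem_ker]
    exact DDw_zero hj 1 (by rw [hA]; decide) (by rw [hB]; decide)
  unfold numJ2
  apply finrank_quot_eq_one _
    ((Finsupp.lapply (Sum.inr (Sum.inl 0))).comp
      (LinearMap.ker (D19 j ε) ⊓ LinearMap.range (D19 j ε)).subtype)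
  · ext ⟨x, hx⟩
    obtain ⟨hxk', hxr⟩ := Submodule.mem_inf.mp hx
    have hxk : D19 j ε x = 0 := LinearMap.mem_ker.mp hxk'
    obtain ⟨y, hy⟩ := hxr
    simp only [LinearMap.mem_ker, LinearMap.coe_comp, Function.comp_apply,
      Submodule.coe_subtype, Finsupp.lapply_apply, Submodule.mem_comap]
    constructor
    · intro h0
      have hyi : y (Sum.inl ()) = 0 := by
        rw [← hy, D_app_b0 hj0, hA, one_mul] at h0
        exact h0
      refine mem_range_D2 hj x hxk 0 ?_ ?_ ?_ ?_ ?_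
      · rw [← hy, D_app_a hj0]
      · exact h0
      · rw [← hy, D_app_c0 hj0, hyi, mul_zero]
      · rw [mul_zero]; exact xb1_zero hj0 hxk (by rw [hA]; decide)
      · rw [mul_zero]; exact xc1_zero hj hxk (by rw [hB]; decide) _
    · rintro ⟨z, hz⟩
      rw [← hz, LinearMap.comp_apply, D_app_b0 hj0, D_app_a hj0, mul_zero]
  · intro r
    refine ⟨r • ⟨_, hwk⟩, ?_⟩
    have : (D19 j ε (Finsupp.single (Sum.inl ()) (1 : ZMod 3)))
        (Sum.inr (Sum.inl 0)) = 1 := by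
      rw [D_app_b0 hj0, Finsupp.single_eq_same, hA, one_mul]
    simp [Finsupp.lapply_apply, this]

lemma J2o_01 (hj : 3 ≤ j) (hA : (j : ZMod 3) + ε = 0) (hB : (j : ZMod 3) = 1) :
    numJ2 j ε = 1 := by
  have hj0 : 0 < j := by omega
  have hwk : D19 j ε (Finsupp.single (Sum.inl ()) (1 : ZMod 3)) ∈
      LinearMap.ker (D19 j ε) ⊓ LinearMap.range (D19 j ε) := by
    refine Submodule.mem_inf.mpr ⟨?_, ⟨_, rfl⟩⟩
    rw [LinearMap.mem_ker]
    exact DDw_zero hj 1 (by rw [hA]; decide) (by rw [hB]; decide)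
  unfold numJ2
  apply finrank_quot_eq_one _
    ((Finsupp.lapply (Sum.inr (Sum.inr (⟨0, hj0⟩ : Fin j)))).comp
      (LinearMap.ker (D19 j ε) ⊓ LinearMap.range (D19 j ε)).subtype)
  · ext ⟨x, hx⟩
    obtain ⟨hxk', hxr⟩ := Submodule.mem_inf.mp hx
    have hxk : D19 j ε x = 0 := LinearMap.mem_ker.mp hxk'
    obtain ⟨y, hy⟩ := hxr
    simp only [LinearMap.mem_ker, LinearMap.coe_comp, Function.comp_apply,
      Submodule.coe_subtype, Finsupp.lapply_apply, Submodule.mem_comap]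
    constructor
    · intro h0
      refine mem_range_D2 hj x hxk 0 ?_ ?_ ?_ ?_ ?_
      · rw [← hy, D_app_a hj0]
      · rw [← hy, D_app_b0 hj0, hA, zero_mul]
      · exact h0
      · rw [mul_zero]; exact xb1_zero hj0 hxk (by rw [hA]; decide)
      · rw [mul_zero]; exact xc1_zero hj hxk (by rw [hB]; decide) _
    · rintro ⟨z, hz⟩
      rw [← hz, LinearMap.comp_apply, D_app_c0 hj0, D_app_a hj0, mul_zero]
  · intro r
    refine ⟨r • ⟨_, hwk⟩, ?_⟩
    have : (D19 j ε (Finsupp.single (Sum.inl ()) (1 : ZMod 3)))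
        (Sum.inr (Sum.inr (⟨0, hj0⟩ : Fin j))) = 1 := by
      rw [D_app_c0 hj0, Finsupp.single_eq_same, hB, one_mul]
    simp [Finsupp.lapply_apply, this]

lemma J2o_10 (hj : 3 ≤ j) (hA : (j : ZMod 3) + ε = 1) (hB : (j : ZMod 3) = 0) :
    numJ2 j ε = 1 := by
  have hj0 : 0 < j := by omega
  have hwk : D19 j ε (Finsupp.single (Sum.inl ()) (1 : ZMod 3)) ∈
      LinearMap.ker (D19 j ε) ⊓ LinearMap.range (D19 j ε) := by
    refine Submodule.mem_inf.mpr ⟨?_, ⟨_, rfl⟩⟩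
    rw [LinearMap.mem_ker]
    exact DDw_zero hj 1 (by rw [hA]; decide) (by rw [hB]; decide)
  unfold numJ2
  apply finrank_quot_eq_one _
    ((Finsupp.lapply (Sum.inr (Sum.inl 0))).comp
      (LinearMap.ker (D19 j ε) ⊓ LinearMap.range (D19 j ε)).subtype)
  · ext ⟨x, hx⟩
    obtain ⟨hxk', hxr⟩ := Submodule.mem_inf.mp hx
    have hxk : D19 j ε x = 0 := LinearMap.mem_ker.mp hxk'
    obtain ⟨y, hy⟩ := hxr
    simp only [LinearMap.mem_ker, LinearMap.coe_comp, Function.comp_apply,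
      Submodule.coe_subtype, Finsupp.lapply_apply, Submodule.mem_comap]
    constructor
    · intro h0
      refine mem_range_D2 hj x hxk 0 ?_ ?_ ?_ ?_ ?_
      · rw [← hy, D_app_a hj0]
      · exact h0
      · rw [← hy, D_app_c0 hj0, hB, zero_mul]
      · rw [mul_zero]; exact xb1_zero hj0 hxk (by rw [hA]; decide)
      · rw [mul_zero]; exact xc1_zero hj hxk (by rw [hB]; decide) _
    · rintro ⟨z, hz⟩
      rw [← hz, LinearMap.comp_apply, D_app_b0 hj0, D_app_a hj0, mul_zero]
  · intro r
    refine ⟨r • ⟨_, hwk⟩, ?_⟩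
    have : (D19 j ε (Finsupp.single (Sum.inl ()) (1 : ZMod 3)))
        (Sum.inr (Sum.inl 0)) = 1 := by
      rw [D_app_b0 hj0, Finsupp.single_eq_same, hA, one_mul]
    simp [Finsupp.lapply_apply, this]

lemma J2o_22 (hj : 3 ≤ j) (hA : (j : ZMod 3) + ε = 2) (hB : (j : ZMod 3) = 2) :
    numJ2 j ε = 1 := by
  have hj0 : 0 < j := by omega
  have hj1 : 1 < j := by omega
  have hwk : Finsupp.single (Sum.inr (Sum.inl 1)) (1 : ZMod 3) ∈
      LinearMap.ker (D19 j ε) ⊓ LinearMap.range (D19 j ε) := by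
    refine Submodule.mem_inf.mpr ⟨?_, ⟨Finsupp.single (Sum.inr (Sum.inl 0)) 1, ?_⟩⟩
    · rw [LinearMap.mem_ker, D_single_b,
        show ((1 + 1 : ℕ) : ZMod 3) = 2 from by norm_num, hA, sub_self, zero_smul,
        smul_zero]
    · rw [D_single_b, show ((0 + 1 : ℕ) : ZMod 3) = 1 from by norm_num, hA]
      norm_num
  unfold numJ2
  apply finrank_quot_eq_one _
    ((((Finsupp.lapply (Sum.inr (Sum.inl 1))) -
      (Finsupp.lapply (Sum.inr (Sum.inr (⟨1, hj1⟩ : Fin j)))) :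
        ((Unit ⊕ ℕ ⊕ Fin j) →₀ ZMod 3) →ₗ[ZMod 3] ZMod 3)).comp
      (LinearMap.ker (D19 j ε) ⊓ LinearMap.range (D19 j ε)).subtype)
  · ext ⟨x, hx⟩
    obtain ⟨hxk', hxr⟩ := Submodule.mem_inf.mp hx
    have hxk : D19 j ε x = 0 := LinearMap.mem_ker.mp hxk'
    obtain ⟨y, hy⟩ := hxr
    simp only [LinearMap.mem_ker, LinearMap.coe_comp, Function.comp_apply,
      Submodule.coe_subtype, LinearMap.sub_apply, Finsupp.lapply_apply,
      Submodule.mem_comap]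
    constructor
    · intro h0
      have he : x (Sum.inr (Sum.inl 1)) = x (Sum.inr (Sum.inr ⟨1, hj1⟩)) :=
        sub_eq_zero.mp h0
      refine mem_range_D2 hj x hxk (2 * x (Sum.inr (Sum.inl 1))) ?_ ?_ ?_ ?_ ?_
      · rw [← hy, D_app_a hj0]
      · exact xb0_zero hj0 hxk (by rw [hA]; decide)
      · exact xc0_zero hj hxk (by rw [hB]; decide) _
      · rw [hA]; exact (by decide : ∀ s : ZMod 3, s = 2 * (2 - 1) * (2 * s)) _
      · rw [hB, he]
        exact (by decide : ∀ s : ZMod 3, s = 2 * (2 - 1) * (2 * s)) _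
    · rintro ⟨z, hz⟩
      rw [← hz, LinearMap.comp_apply, D_app_bs hj0 (D19 j ε z) 0,
        D_app_cs (D19 j ε z) 0 hj1, D_app_b0 hj0, D_app_c0 hj0, hA, hB, sub_self]
  · intro r
    refine ⟨r • ⟨_, hwk⟩, ?_⟩
    simp [Finsupp.lapply_apply, Finsupp.single_apply]

end Cases3

/-- For the two-tailed 3-complex: `D³ = 0`, and the non-free `F₃[D]/(D³)`-summands depend
only on `(ε, j mod 3)` as tabulated: `(0,0)`: one 1-dim; `(0,1)`: one 2-dim and one 1-dim;
`(0,2)`: one 2-dim; `(1,0)`: one 2-dim; `(1,1)`: one 1-dim; `(1,2)`: none; `(2,0)`: none;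
`(2,1)`: one 2-dim; `(2,2)`: one 1-dim. -/

theorem stmt19 (j : ℕ) (hj : 3 ≤ j) (ε : ZMod 3) :
    (∀ v, D19 j ε (D19 j ε (D19 j ε v)) = 0) ∧
    (ε = 0 → j % 3 = 0 → numJ1 j ε = 1 ∧ numJ2 j ε = 0) ∧
    (ε = 0 → j % 3 = 1 → numJ1 j ε = 1 ∧ numJ2 j ε = 1) ∧
    (ε = 0 → j % 3 = 2 → numJ1 j ε = 0 ∧ numJ2 j ε = 1) ∧
    (ε = 1 → j % 3 = 0 → numJ1 j ε = 0 ∧ numJ2 j ε = 1) ∧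
    (ε = 1 → j % 3 = 1 → numJ1 j ε = 1 ∧ numJ2 j ε = 0) ∧
    (ε = 1 → j % 3 = 2 → numJ1 j ε = 0 ∧ numJ2 j ε = 0) ∧
    (ε = 2 → j % 3 = 0 → numJ1 j ε = 0 ∧ numJ2 j ε = 0) ∧
    (ε = 2 → j % 3 = 1 → numJ1 j ε = 0 ∧ numJ2 j ε = 1) ∧
    (ε = 2 → j % 3 = 2 → numJ1 j ε = 1 ∧ numJ2 j ε = 0) := by
  have hBmod : (j : ZMod 3) = ((j % 3 : ℕ) : ZMod 3) := (ZMod.natCast_mod j 3).symm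
  refine ⟨fun v => D3 hj v, ?_, ?_, ?_, ?_, ?_, ?_, ?_, ?_, ?_⟩
  · intro hε hm
    have hB : (j : ZMod 3) = 0 := by rw [hBmod, hm]; norm_num
    have hA : (j : ZMod 3) + ε = 0 := by rw [hB, hε]; decide
    exact ⟨J1o_00 hj hA hB, J2z_00 hj hA hB⟩
  · intro hε hm
    have hB : (j : ZMod 3) = 1 := by rw [hBmod, hm]; norm_num
    have hA : (j : ZMod 3) + ε = 1 := by rw [hB, hε]; decide
    exact ⟨J1o_11 hj hA hB, J2o_11 hj hA hB⟩
  · intro hε hm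
    have hB : (j : ZMod 3) = 2 := by rw [hBmod, hm]; norm_num
    have hA : (j : ZMod 3) + ε = 2 := by rw [hB, hε]; decide
    exact ⟨J1z_22 hj hA hB, J2o_22 hj hA hB⟩
  · intro hε hm
    have hB : (j : ZMod 3) = 0 := by rw [hBmod, hm]; norm_num
    have hA : (j : ZMod 3) + ε = 1 := by rw [hB, hε]; decide
    exact ⟨J1z_10 hj hA hB, J2o_10 hj hA hB⟩
  · intro hε hm
    have hB : (j : ZMod 3) = 1 := by rw [hBmod, hm]; norm_num
    have hA : (j : ZMod 3) + ε = 2 := by rw [hB, hε]; decide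
    exact ⟨J1o_21 hj hA hB, J2z_21 hj hA hB⟩
  · intro hε hm
    have hB : (j : ZMod 3) = 2 := by rw [hBmod, hm]; norm_num
    have hA : (j : ZMod 3) + ε = 0 := by rw [hB, hε]; decide
    exact ⟨J1z_02 hj hA hB, J2z_02 hj hA hB⟩
  · intro hε hm
    have hB : (j : ZMod 3) = 0 := by rw [hBmod, hm]; norm_num
    have hA : (j : ZMod 3) + ε = 2 := by rw [hB, hε]; decide
    exact ⟨J1z_20 hj hA hB, J2z_20 hj hA hB⟩
  · intro hε hm
    have hB : (j : ZMod 3) = 1 := by rw [hBmod, hm]; norm_num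
    have hA : (j : ZMod 3) + ε = 0 := by rw [hB, hε]; decide
    exact ⟨J1z_01 hj hA hB, J2o_01 hj hA hB⟩
  · intro hε hm
    have hB : (j : ZMod 3) = 2 := by rw [hBmod, hm]; norm_num
    have hA : (j : ZMod 3) + ε = 1 := by rw [hB, hε]; decide
    exact ⟨J1o_12 hj hA hB, J2z_12 hj hA hB⟩
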